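/- For every τ in the upper half-plane, θ(−τ; 3τ) = i·q^{−1/6}·η(τ) and θ(τ; 3τ) = −i·q^{−1/6}·η(τ). -/

import Mathlib

open Complex MeasureTheory
open scoped Real

noncomputable section

/-- `p(n)`: the number of partitions of `n`. -/
def partitionCount (n : ℕ) : ℕ := Fintype.card (Nat.Partition n)

/-- The rank of a partition: its largest part minus the number of its parts. -/
def partitionRank {n : ℕ} (lam : Nat.Partition n) : ℤ :=
  (lam.parts.sup : ℤ) - lam.parts.card

/-- `N(m,n)`: the number of partitions of `n` with rank `m`. -/
def rankCount (m : ℤ) (n : ℕ) : ℕ :=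
  Fintype.card {lam : Nat.Partition n // partitionRank lam = m}

/-- `sech` -/
def sech (t : ℝ) : ℝ := 1 / Real.cosh t

/-- `β = π / √(6n)` -/
def betav (n : ℕ) : ℝ := π / Real.sqrt (6 * n)

/-- `s = β (1 + i x m^{-1/3})` -/
def sval (n m : ℕ) (x : ℝ) : ℂ :=
  (betav n : ℂ) * (1 + I * (x : ℂ) * ((m : ℝ) ^ (-(1 : ℝ)/3) : ℝ))

/-- The rank generating function `R(z; τ)`. -/
def rankGen (z τ : ℂ) : ℂ :=
  ∑' n : ℕ, ∑' m : ℤ,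
    (rankCount m n : ℂ) * Complex.exp (2 * π * I * z) ^ m * Complex.exp (2 * π * I * τ) ^ n

/-- The Dedekind eta function. -/
def dedekindEta (τ : ℂ) : ℂ :=
  Complex.exp (π * I * τ / 12) * ∏' n : ℕ, (1 - Complex.exp (2 * π * I * τ) ^ (n + 1))

/-- The Jacobi theta function `θ(z;τ)`. -/
def thetaFn (z τ : ℂ) : ℂ :=
  I * Complex.exp (π * I * τ / 4) * Complex.exp (π * I * z) *
    ∏' n : ℕ,
      ((1 - Complex.exp (2 * π * I * τ) ^ (n + 1)) *
        (1 - Complex.exp (2 * π * I * z) * Complex.exp (2 * π * I * τ) ^ (n + 1)) *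
        (1 - (Complex.exp (2 * π * I * z))⁻¹ * Complex.exp (2 * π * I * τ) ^ n))

/-- The Appell–Lerch sum `A₁(u,v;τ)`. -/
def A1 (u v τ : ℂ) : ℂ :=
  Complex.exp (π * I * u) *
    ∑' n : ℤ, (-1 : ℂ) ^ n * Complex.exp (2 * π * I * τ) ^ ((n ^ 2 + n) / 2) *
      Complex.exp (2 * π * I * n * v) /
        (1 - Complex.exp (2 * π * I * u) * Complex.exp (2 * π * I * τ) ^ n)

/-- The Mordell integral `h(z;τ)`. -/
def mordellH (z τ : ℂ) : ℂ :=
  ∫ w : ℝ, Complex.exp (π * I * τ * w ^ 2 - 2 * π * z * w) / Complex.cosh (π * w)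

/-- `R_m(τ)`. -/
def rankGenCoeff (m : ℤ) (τ : ℂ) : ℂ :=
  ∫ z in (-1/2 : ℝ)..(1/2 : ℝ), rankGen z τ * Complex.exp (-2 * π * I * m * z)

/-- `g_m(z;τ)`. -/
def gFun (m : ℕ) (z τ : ℂ) : ℂ :=
  if m % 3 = 0 then
    -A1 (3 * z) τ (3 * τ) * Complex.exp (3 * π * I * z) +
      A1 (3 * z) (-τ) (3 * τ) * Complex.exp (-3 * π * I * z)
  else if m % 3 = 1 then
    -A1 (3 * z) (-τ) (3 * τ) * Complex.exp (-π * I * z) -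
      I * (dedekindEta (3 * τ)) ^ 3 / thetaFn (3 * z) (3 * τ) * Complex.exp (-π * I * z)
  else
    A1 (3 * z) τ (3 * τ) * Complex.exp (π * I * z) +
      I * (dedekindEta (3 * τ)) ^ 3 / thetaFn (3 * z) (3 * τ) * Complex.exp (π * I * z)

/-- `E_k(0)` via the generating function `2e^{xz}/(e^z+1)` at `x = 0`. -/
def eulerZero (k : ℕ) : ℚ :=
  (k.factorial : ℚ) *
    PowerSeries.coeff k (PowerSeries.C 2 * (PowerSeries.exp ℚ + 1)⁻¹)

/-- Generating function of partitions. -/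
def partitionGen (q : ℂ) : ℂ := ∏' n : ℕ, (1 - q ^ (n + 1))⁻¹

/-- membership in the lattice `ℤ + ℤτ`. -/
def inLattice (τ w : ℂ) : Prop := ∃ a b : ℤ, w = (a : ℂ) + (b : ℂ) * τ

section AuxTheta
open Filter
open scoped Topology


lemma mult_one_sub {g : ℕ → ℂ} (hg : Summable g) (h : ∀ n, 1 - g n ≠ 0) :
    Multipliable (fun n => 1 - g n) := by
  have h3 := hg.clog_one_sub.hasSum.cexp
  refine ⟨_, h3.congr fun n => ?_⟩
  exact Finset.prod_congr rfl fun i _ => Complex.exp_log (h i)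

variable {x : ℂ}

lemma norm_pow_lt (hx : ‖x‖ < 1) {k : ℕ} (hk : k ≠ 0) : ‖x ^ k‖ < 1 := by
  rw [norm_pow]
  exact pow_lt_one₀ (norm_nonneg x) hx hk

lemma one_sub_pow_ne (hx : ‖x‖ < 1) {k : ℕ} (hk : k ≠ 0) : 1 - x ^ k ≠ 0 := by
  intro h
  have h1 : x ^ k = 1 := by linear_combination -h
  have h2 := norm_pow_lt hx hk
  rw [h1, norm_one] at h2
  exact lt_irrefl _ h2

lemma mult_f (hx : ‖x‖ < 1) : Multipliable (fun k : ℕ => 1 - x ^ (k + 1)) := by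
  refine mult_one_sub ?_ fun n => one_sub_pow_ne hx n.succ_ne_zero
  exact (summable_geometric_of_norm_lt_one hx).comp_injective fun a b => by omega

lemma mult_shift (hx : ‖x‖ < 1) (j : ℕ) (hj : j ≠ 0) :
    Multipliable (fun n : ℕ => 1 - x ^ (3 * n + j)) := by
  refine mult_one_sub ?_ fun n => one_sub_pow_ne hx (by omega)
  exact (summable_geometric_of_norm_lt_one hx).comp_injective fun a b => by omega

lemma keyA (hx : ‖x‖ < 1) (N : ℕ) :
    ∏ n ∈ Finset.range N, ((1 - x ^ (3 * n + 3)) * (1 - x ^ (3 * n + 2)) * (1 - x ^ (3 * n + 1)))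
      = ∏ k ∈ Finset.range (3 * N), (1 - x ^ (k + 1)) := by
  induction N with
  | zero => simp
  | succ N ih =>
    rw [Finset.prod_range_succ, ih, show 3 * (N + 1) = 3 * N + 1 + 1 + 1 by ring,
      Finset.prod_range_succ, Finset.prod_range_succ, Finset.prod_range_succ]
    ring

lemma keyB (hx : ‖x‖ < 1) (hx0 : x ≠ 0) (N : ℕ) :
    (∏ n ∈ Finset.range (N + 1),
        ((1 - x ^ (3 * n + 3)) * (1 - x ^ (3 * n + 4)) * (1 - x⁻¹ * x ^ (3 * n))))
        * (1 - x ^ (3 * N + 2))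
      = -x⁻¹ * ∏ k ∈ Finset.range (3 * N + 4), (1 - x ^ (k + 1)) := by
  induction N with
  | zero =>
    simp only [Finset.prod_range_succ, Finset.prod_range_zero, one_mul]
    field_simp
    ring
  | succ N ih =>
    have hstep : (1 : ℂ) - x⁻¹ * x ^ (3 * (N + 1)) = 1 - x ^ (3 * N + 2) := by
      rw [show 3 * (N + 1) = 1 + (3 * N + 2) by ring, pow_add, pow_one, ← mul_assoc,
        inv_mul_cancel₀ hx0, one_mul]
    have hR : ∏ k ∈ Finset.range (3 * (N + 1) + 4), (1 - x ^ (k + 1))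
        = (∏ k ∈ Finset.range (3 * N + 4), (1 - x ^ (k + 1))) *
          ((1 - x ^ (3 * N + 5)) * (1 - x ^ (3 * N + 6)) * (1 - x ^ (3 * N + 7))) := by
      rw [show 3 * (N + 1) + 4 = 3 * N + 4 + 1 + 1 + 1 by ring, Finset.prod_range_succ,
        Finset.prod_range_succ, Finset.prod_range_succ]
      ring
    rw [Finset.prod_range_succ, hstep, hR]
    linear_combination ((1 - x ^ (3 * (N + 1) + 3)) * (1 - x ^ (3 * (N + 1) + 4)) *
      (1 - x ^ (3 * (N + 1) + 2))) * ih

lemma prodA (hx : ‖x‖ < 1) :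
    ∏' n : ℕ, ((1 - x ^ (3 * n + 3)) * (1 - x ^ (3 * n + 2)) * (1 - x ^ (3 * n + 1)))
      = ∏' k : ℕ, (1 - x ^ (k + 1)) := by
  have hm : Multipliable fun n : ℕ =>
      (1 - x ^ (3 * n + 3)) * (1 - x ^ (3 * n + 2)) * (1 - x ^ (3 * n + 1)) :=
    ((mult_shift hx 3 (by omega)).mul (mult_shift hx 2 (by omega))).mul
      (mult_shift hx 1 (by omega))
  refine HasProd.tprod_eq ?_
  rw [hm.hasProd_iff_tendsto_nat]
  have h1 : Tendsto (fun N : ℕ => ∏ k ∈ Finset.range (3 * N), (1 - x ^ (k + 1))) atTop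
      (𝓝 (∏' k : ℕ, (1 - x ^ (k + 1)))) :=
    ((mult_f hx).hasProd.tendsto_prod_nat).comp
      (tendsto_atTop_mono (fun n => by simp only [id_eq]; omega) tendsto_id)
  exact h1.congr fun N => (keyA hx N).symm

lemma prodB (hx : ‖x‖ < 1) (hx0 : x ≠ 0) :
    ∏' n : ℕ, ((1 - x ^ (3 * n + 3)) * (1 - x ^ (3 * n + 4)) * (1 - x⁻¹ * x ^ (3 * n)))
      = -x⁻¹ * ∏' k : ℕ, (1 - x ^ (k + 1)) := by
  have hm : Multipliable fun n : ℕ =>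
      (1 - x ^ (3 * n + 3)) * (1 - x ^ (3 * n + 4)) * (1 - x⁻¹ * x ^ (3 * n)) := by
    refine ((mult_shift hx 3 (by omega)).mul (mult_shift hx 4 (by omega))).mul
      (mult_one_sub ?_ ?_)
    · exact ((summable_geometric_of_norm_lt_one hx).comp_injective
        (fun a b => by omega)).mul_left x⁻¹
    · intro n
      rcases Nat.eq_zero_or_pos n with rfl | hn
      · simp only [mul_zero, pow_zero, mul_one]
        intro h
        have hxi : x⁻¹ = 1 := by linear_combination -h
        have hx1 : x = 1 := by
          have := congrArg (fun y => x * y) hxi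
          simpa [mul_inv_cancel₀ hx0] using this.symm
        rw [hx1, norm_one] at hx
        exact lt_irrefl _ hx
      · obtain ⟨m, hm, hm0⟩ : ∃ m, 3 * n = m + 1 ∧ m ≠ 0 := ⟨3 * n - 1, by omega, by omega⟩
        rw [hm, pow_succ', ← mul_assoc, inv_mul_cancel₀ hx0, one_mul]
        exact one_sub_pow_ne hx hm0
  refine HasProd.tprod_eq ?_
  rw [hm.hasProd_iff_tendsto_nat, ← tendsto_add_atTop_iff_nat 1]
  have h1 : Tendsto (fun N : ℕ => ∏ k ∈ Finset.range (3 * N + 4), (1 - x ^ (k + 1))) atTop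
      (𝓝 (∏' k : ℕ, (1 - x ^ (k + 1)))) :=
    ((mult_f hx).hasProd.tendsto_prod_nat).comp
      (tendsto_atTop_mono (fun n => by simp only [id_eq]; omega) tendsto_id)
  have h2 : Tendsto (fun N : ℕ => (1 - x ^ (3 * N + 2))) atTop (𝓝 1) := by
    have hg : Tendsto (fun N : ℕ => x ^ (3 * N + 2)) atTop (𝓝 0) := by
      have h0 : Tendsto (fun N : ℕ => x ^ 2 * (x ^ 3) ^ N) atTop (𝓝 (x ^ 2 * 0)) :=
        (tendsto_pow_atTop_nhds_zero_of_norm_lt_one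
          (by simpa using norm_pow_lt hx (k := 3) (by omega))).const_mul (x ^ 2)
      rw [mul_zero] at h0
      exact h0.congr fun N => by ring
    simpa using tendsto_const_nhds.sub hg
  have h3 : Tendsto (fun N : ℕ =>
      -x⁻¹ * (∏ k ∈ Finset.range (3 * N + 4), (1 - x ^ (k + 1))) * (1 - x ^ (3 * N + 2))⁻¹)
      atTop (𝓝 (-x⁻¹ * ∏' k : ℕ, (1 - x ^ (k + 1)))) := by
    have := (h1.const_mul (-x⁻¹)).mul (h2.inv₀ one_ne_zero)
    simpa [mul_assoc] using this
  refine h3.congr fun N => ?_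
  have hne : (1 : ℂ) - x ^ (3 * N + 2) ≠ 0 := one_sub_pow_ne hx (by omega)
  rw [← keyB hx hx0 N, mul_assoc, mul_inv_cancel₀ hne, mul_one]


end AuxTheta

/-- `θ(∓τ; 3τ) = ±i q^{-1/6} η(τ)`. -/
theorem theta_at_pm_tau (τ : ℂ) (hτ : 0 < τ.im) :
    thetaFn (-τ) (3 * τ) = I * Complex.exp (-π * I * τ / 3) * dedekindEta τ ∧
      thetaFn τ (3 * τ) = -I * Complex.exp (-π * I * τ / 3) * dedekindEta τ := by
  set x := Complex.exp (2 * ↑π * I * τ) with hxdef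
  have hx0 : x ≠ 0 := Complex.exp_ne_zero _
  have hx : ‖x‖ < 1 := by
    rw [hxdef, Complex.norm_exp, Real.exp_lt_one_iff]
    have hre : (2 * (π : ℂ) * I * τ).re = -(2 * π * τ.im) := by
      simp [Complex.mul_re, Complex.mul_im]
      try ring
    rw [hre]
    have := Real.pi_pos
    nlinarith
  have e3 : Complex.exp (2 * (π : ℂ) * I * (3 * τ)) = x ^ 3 := by
    rw [show 2 * (π : ℂ) * I * (3 * τ) = ((3 : ℕ) : ℂ) * (2 * (π : ℂ) * I * τ) by
      push_cast; ring, Complex.exp_nat_mul]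
  have em : Complex.exp (2 * (π : ℂ) * I * -τ) = x⁻¹ := by
    rw [show 2 * (π : ℂ) * I * -τ = -(2 * (π : ℂ) * I * τ) by ring, Complex.exp_neg]
  have t1 : ∀ n : ℕ, (x ^ 3) ^ (n + 1) = x ^ (3 * n + 3) := fun n => by
    rw [← pow_mul]; ring_nf
  have t2 : ∀ n : ℕ, x⁻¹ * (x ^ 3) ^ (n + 1) = x ^ (3 * n + 2) := fun n => by
    rw [t1, show 3 * n + 3 = 3 * n + 2 + 1 by omega, pow_succ', ← mul_assoc,
      inv_mul_cancel₀ hx0, one_mul]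
  have t3 : ∀ n : ℕ, x * (x ^ 3) ^ n = x ^ (3 * n + 1) := fun n => by
    rw [← pow_mul, ← pow_succ']
  have t4 : ∀ n : ℕ, x * (x ^ 3) ^ (n + 1) = x ^ (3 * n + 4) := fun n => by
    rw [t1, ← pow_succ']
  have t5 : ∀ n : ℕ, (x ^ 3) ^ n = x ^ (3 * n) := fun n => by rw [← pow_mul]
  constructor
  · unfold thetaFn dedekindEta
    rw [e3, em, inv_inv]
    have hprod : (∏' n : ℕ, ((1 - (x ^ 3) ^ (n + 1)) * (1 - x⁻¹ * (x ^ 3) ^ (n + 1)) *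
        (1 - x * (x ^ 3) ^ n))) = ∏' k : ℕ, (1 - x ^ (k + 1)) := by
      rw [← prodA hx]
      exact tprod_congr fun n => by rw [t2 n, t3 n, t1 n]
    rw [hprod]
    have hexp : Complex.exp ((π : ℂ) * I * (3 * τ) / 4) * Complex.exp ((π : ℂ) * I * -τ)
        = Complex.exp (-(π : ℂ) * I * τ / 3) * Complex.exp ((π : ℂ) * I * τ / 12) := by
      rw [← Complex.exp_add, ← Complex.exp_add]
      congr 1
      ring
    linear_combination (I * ∏' k : ℕ, (1 - x ^ (k + 1))) * hexp
  · unfold thetaFn dedekindEta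
    rw [e3, ← hxdef]
    have hprod : (∏' n : ℕ, ((1 - (x ^ 3) ^ (n + 1)) * (1 - x * (x ^ 3) ^ (n + 1)) *
        (1 - x⁻¹ * (x ^ 3) ^ n))) = -x⁻¹ * ∏' k : ℕ, (1 - x ^ (k + 1)) := by
      rw [← prodB hx hx0]
      exact tprod_congr fun n => by rw [t4 n, t5 n, t1 n]
    rw [hprod]
    have emi : x⁻¹ = Complex.exp (-(2 * (π : ℂ) * I * τ)) := by
      rw [hxdef, ← Complex.exp_neg]
    rw [emi]
    have hexp : Complex.exp ((π : ℂ) * I * (3 * τ) / 4) * Complex.exp ((π : ℂ) * I * τ)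
        * Complex.exp (-(2 * (π : ℂ) * I * τ))
        = Complex.exp (-(π : ℂ) * I * τ / 3) * Complex.exp ((π : ℂ) * I * τ / 12) := by
      rw [← Complex.exp_add, ← Complex.exp_add, ← Complex.exp_add]
      congr 1
      ring
    linear_combination (-(I * ∏' k : ℕ, (1 - x ^ (k + 1)))) * hexp

end
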